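/- Let d ≥ 1, let Λ : ℝ^d → ℝ be a convex function, let H be a real symmetric d×d matrix and c > 0 a constant with v^⊤Hv ≥ c‖v‖² for all v ∈ ℝ^d, let κ ∈ ℝ^d, ρ > 0, and define q(θ) = (1/2)(θ − κ)^⊤H(θ − κ) − (1/2)κ^⊤Hκ. Suppose Δ ≥ 0 satisfies |Λ(θ) − q(θ)| ≤ Δ for all θ with ‖θ − κ‖ ≤ ρ. Then for every θ with ‖θ − κ‖ ≥ ρ, Λ(θ) − Λ(κ) ≥ (‖θ − κ‖/ρ)·(cρ²/2 − 2Δ). -/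

import Mathlib

open Matrix

/-- A convex function that is uniformly `Δ`-close on the ball of radius `ρ`
around `κ` to the quadratic `q(θ) = ½(θ−κ)ᵀH(θ−κ) − ½κᵀHκ`, where `H` is symmetric with
`vᵀHv ≥ c‖v‖²`, grows at least linearly outside the ball:
for `‖θ − κ‖ ≥ ρ`, `Λ(θ) − Λ(κ) ≥ (‖θ−κ‖/ρ)·(cρ²/2 − 2Δ)`. -/
theorem convex_quadratic_approx_linear_growth (d : ℕ) (hd : 1 ≤ d)
    (Λ : EuclideanSpace ℝ (Fin d) → ℝ) (hΛ : ConvexOn ℝ Set.univ Λ)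
    (H : Matrix (Fin d) (Fin d) ℝ) (hHsymm : H.IsSymm)
    (c : ℝ) (hc : 0 < c)
    (hHc : ∀ v : EuclideanSpace ℝ (Fin d),
      c * ‖v‖ ^ 2 ≤ (EuclideanSpace.equiv (Fin d) ℝ) v ⬝ᵥ
        H.mulVec ((EuclideanSpace.equiv (Fin d) ℝ) v))
    (κ : EuclideanSpace ℝ (Fin d)) (ρ : ℝ) (hρ : 0 < ρ)
    (q : EuclideanSpace ℝ (Fin d) → ℝ)
    (hq : ∀ θ, q θ =
      (1 / 2) * ((EuclideanSpace.equiv (Fin d) ℝ) (θ - κ) ⬝ᵥ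
          H.mulVec ((EuclideanSpace.equiv (Fin d) ℝ) (θ - κ)))
        - (1 / 2) * ((EuclideanSpace.equiv (Fin d) ℝ) κ ⬝ᵥ
          H.mulVec ((EuclideanSpace.equiv (Fin d) ℝ) κ)))
    (Δ : ℝ) (hΔ : 0 ≤ Δ)
    (happrox : ∀ θ, ‖θ - κ‖ ≤ ρ → |Λ θ - q θ| ≤ Δ) :
    ∀ θ, ρ ≤ ‖θ - κ‖ →
      (‖θ - κ‖ / ρ) * (c * ρ ^ 2 / 2 - 2 * Δ) ≤ Λ θ - Λ κ := by
  intro θ hθ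
  set n : ℝ := ‖θ - κ‖ with hn
  have hn0 : 0 < n := lt_of_lt_of_le hρ hθ
  set t : ℝ := ρ / n with ht
  have ht0 : 0 < t := div_pos hρ hn0
  have ht1 : t ≤ 1 := (div_le_one hn0).mpr hθ
  set θ' : EuclideanSpace ℝ (Fin d) := κ + t • (θ - κ) with hθ'
  have hdiff : θ' - κ = t • (θ - κ) := by simp [hθ']
  have hnorm' : ‖θ' - κ‖ = ρ := by
    rw [hdiff, norm_smul, Real.norm_eq_abs, abs_of_pos ht0, ht]
    field_simp
    exact hn.symm
  -- quadratic lower bound at θ'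
  have hq' : c * ρ ^ 2 / 2 - (1 / 2) * ((EuclideanSpace.equiv (Fin d) ℝ) κ ⬝ᵥ
      H.mulVec ((EuclideanSpace.equiv (Fin d) ℝ) κ)) ≤ q θ' := by
    have := hHc (θ' - κ)
    rw [hnorm'] at this
    rw [hq θ']
    linarith
  -- q κ
  have hqκ : q κ = - ((1 / 2) * ((EuclideanSpace.equiv (Fin d) ℝ) κ ⬝ᵥ
      H.mulVec ((EuclideanSpace.equiv (Fin d) ℝ) κ))) := by
    rw [hq κ]
    simp
  have hΛθ' : q θ' - Δ ≤ Λ θ' := by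
    have := happrox θ' (le_of_eq hnorm')
    have := abs_le.mp this
    linarith
  have hΛκ : Λ κ ≤ q κ + Δ := by
    have h0 : ‖κ - κ‖ ≤ ρ := by simp [hρ.le]
    have := abs_le.mp (happrox κ h0)
    linarith
  -- convexity
  have hconv : Λ θ' ≤ (1 - t) * Λ κ + t * Λ θ := by
    have hcomb : (1 - t) • κ + t • θ = θ' := by
      rw [hθ', smul_sub]
      module
    have := hΛ.2 (Set.mem_univ κ) (Set.mem_univ θ) (by linarith : (0:ℝ) ≤ 1 - t)
      ht0.le (by ring)
    rw [hcomb] at this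
    simpa using this
  -- combine
  have hkey : c * ρ ^ 2 / 2 - 2 * Δ ≤ t * (Λ θ - Λ κ) := by
    have h1 : c * ρ ^ 2 / 2 - 2 * Δ ≤ Λ θ' - Λ κ := by
      rw [hqκ] at hΛκ
      linarith
    nlinarith [hconv]
  have htn : t * n = ρ := by rw [ht]; exact div_mul_cancel₀ ρ hn0.ne'
  have h2 := mul_le_mul_of_nonneg_left hkey (le_of_lt (div_pos hn0 hρ))
  have h3 : n / ρ * (t * (Λ θ - Λ κ)) = Λ θ - Λ κ := by
    field_simp [ht]; rw [mul_comm n t, htn]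
  linarith [h2, h3.le, h3.ge]
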